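/- Let a boundary compactification model of a group G on a compact metrizable space X be given, and let p ∈ Y = X ∖ ι(G). Assume that Stab p acts cocompactly on Y ∖ {p} (there is a compact K ⊆ Y ∖ {p} with (Stab p)·K = Y ∖ {p}). Then Stab p acts cocompactly on X ∖ {p} if and only if there is no subset S ⊆ G with (Stab p)·S = S that meets infinitely many distinct right cosets (Stab p)g and satisfies ∂(S) = {p}. -/

import Mathlib

open Pointwise

/-- A *boundary compactification model* of a group `G` on a space `X` carrying an
action of `G`: an injective map `emb : G → X` with open range, discrete in the
subspace topology, such that the action extends the left multiplication of `G`. -/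
structure BoundaryModel (G X : Type*) [Group G] [TopologicalSpace X]
    [MulAction G X] where
  emb : G → X
  inj : Function.Injective emb
  open_range : IsOpen (Set.range emb)
  discrete_range : ∀ g : G, ∃ U : Set X, IsOpen U ∧ U ∩ Set.range emb = {emb g}
  smul_emb : ∀ g h : G, g • emb h = emb (g * h)

/-- An infinite subset of the (discrete) image of `emb` in a compact space has a
closure point outside the range of `emb`. -/
lemma BoundaryModel.exists_closure_not_range {G X : Type*} [Group G]
    [TopologicalSpace X] [CompactSpace X] [MulAction G X]
    (M : BoundaryModel G X) {A : Set X} (hA : A ⊆ Set.range M.emb)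
    (hinf : A.Infinite) : ∃ q ∈ closure A, q ∉ Set.range M.emb := by
  by_contra hcon
  push_neg at hcon
  have hc : IsCompact (closure A) := isClosed_closure.isCompact
  classical
  -- choose the isolating open sets
  choose U hUopen hUeq using M.discrete_range
  set V : X → Set X := fun x =>
    if hx : x ∈ Set.range M.emb then U hx.choose else Set.univ with hV
  have hVnhds : ∀ x ∈ closure A, V x ∈ nhds x := by
    intro x hx
    have hxr : x ∈ Set.range M.emb := hcon x hx
    have hVx : V x = U hxr.choose := dif_pos hxr
    rw [hVx]
    refine (hUopen _).mem_nhds ?_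
    have : M.emb hxr.choose ∈ U hxr.choose ∩ Set.range M.emb := by
      rw [hUeq]; rfl
    rw [hxr.choose_spec] at this
    exact this.1
  obtain ⟨t, htmem, htcov⟩ := hc.elim_nhds_subcover V hVnhds
  have hAfin : A ⊆ ↑t := by
    intro a ha
    have haR : a ∈ Set.range M.emb := hA ha
    have : a ∈ ⋃ x ∈ t, V x := htcov (subset_closure ha)
    simp only [Set.mem_iUnion] at this
    obtain ⟨x, hxt, haVx⟩ := this
    have hxr : x ∈ Set.range M.emb := hcon x (htmem x hxt)
    have hVx : V x = U hxr.choose := dif_pos hxr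
    rw [hVx] at haVx
    have : a ∈ U hxr.choose ∩ Set.range M.emb := ⟨haVx, haR⟩
    rw [hUeq] at this
    have : a = M.emb hxr.choose := this
    rw [this, hxr.choose_spec]
    exact hxt
  exact hinf (Set.Finite.subset t.finite_toSet hAfin)

/-- Let a boundary compactification model of `G` on a compact
metrizable space `X` be given and `p ∈ Y = X ∖ emb(G)`. If `Stab p` acts cocompactly
on `Y ∖ {p}`, then `Stab p` acts cocompactly on `X ∖ {p}` if and only if there is no
`Stab p`-invariant set `S ⊆ G` meeting infinitely many right cosets `(Stab p)g` with
`∂(S) = {p}`. -/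
theorem cocompact_iff_no_invariant_set {G X : Type*} [Group G]
    [TopologicalSpace X] [CompactSpace X] [TopologicalSpace.MetrizableSpace X]
    [MulAction G X] [ContinuousConstSMul G X]
    (M : BoundaryModel G X) (p : X) (hp : p ∉ Set.range M.emb)
    (hcoY : ∃ K : Set X, IsCompact K ∧ K ⊆ (Set.range M.emb)ᶜ \ {p} ∧
        (⋃ g ∈ MulAction.stabilizer G p, g • K) = (Set.range M.emb)ᶜ \ {p}) :
    (∃ K : Set X, IsCompact K ∧ p ∉ K ∧
        (⋃ g ∈ MulAction.stabilizer G p, g • K) = {p}ᶜ) ↔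
      ¬∃ S : Set G, (MulAction.stabilizer G p : Set G) * S = S ∧
        ((Quotient.mk (QuotientGroup.rightRel (MulAction.stabilizer G p))) ''
            S).Infinite ∧
        closure (M.emb '' S) ∩ (Set.range M.emb)ᶜ = {p} := by
  classical
  letI : MetricSpace X := TopologicalSpace.metrizableSpaceMetric X
  set H := MulAction.stabilizer G p with hHdef
  set q : G → Quotient (QuotientGroup.rightRel H) :=
    Quotient.mk (QuotientGroup.rightRel H) with hq
  -- membership in S after multiplying by a stabilizer element
  have hmulmem : ∀ {S : Set G}, (↑H : Set G) * S = S →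
      ∀ {h : G}, h ∈ H → ∀ {g : G}, g ∈ S → h * g ∈ S := by
    intro S hS h hh g hg
    rw [← hS]; exact Set.mul_mem_mul hh hg
  -- translate of image under stabilizer element
  have himg : ∀ (S : Set G), (↑H : Set G) * S = S → ∀ h ∈ H,
      h • (M.emb '' S) = M.emb '' S := by
    intro S hS h hh
    have h1 : h • (M.emb '' S) = M.emb '' ((fun g => h * g) '' S) := by
      rw [Set.image_image]
      ext x
      constructor
      · rintro ⟨y, ⟨g, hg, rfl⟩, rfl⟩
        exact ⟨g, hg, (M.smul_emb h g).symm⟩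
      · rintro ⟨g, hg, rfl⟩
        exact ⟨M.emb g, ⟨g, hg, rfl⟩, M.smul_emb h g⟩
    have h2 : (fun g => h * g) '' S = S := by
      ext x
      constructor
      · rintro ⟨g, hg, rfl⟩
        exact hmulmem hS hh hg
      · intro hx
        refine ⟨h⁻¹ * x, hmulmem hS (inv_mem hh) hx, ?_⟩
        group
    rw [h1, h2]
  -- quotients agree for elements differing by a stabilizer element
  have hqeq : ∀ {h g : G}, h ∈ H → q (h * g) = q g := by
    intro h g hh
    refine Quotient.eq'.mpr ?_
    rw [QuotientGroup.rightRel_apply]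
    simpa using hh
  constructor
  · -- cocompact ⟹ no bad set
    rintro ⟨K, hKc, hpK, hKcov⟩ ⟨S, hHS, hSinf, hbd⟩
    set E : Set G := {g | g ∈ S ∧ M.emb g ∈ K} with hE
    -- every coset of S is represented in E
    have hrep : q '' S ⊆ q '' E := by
      rintro _ ⟨g, hg, rfl⟩
      have hne : M.emb g ∈ ({p}ᶜ : Set X) := by
        intro h
        exact hp ⟨g, h⟩
      rw [← hKcov] at hne
      simp only [Set.mem_iUnion] at hne
      obtain ⟨h, hh, x, hxK, hx⟩ := hne
      have hx' : M.emb (h⁻¹ * g) = x := by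
        have := M.smul_emb h⁻¹ (g)
        rw [← hx, smul_smul, inv_mul_cancel, one_smul] at this
        exact this.symm
      have hgE : h⁻¹ * g ∈ E := ⟨hmulmem hHS (inv_mem hh) hg, hx' ▸ hxK⟩
      exact ⟨h⁻¹ * g, hgE, hqeq (inv_mem hh)⟩
    have hEinf : E.Infinite := by
      intro hfin
      exact (hSinf.mono hrep) (hfin.image q)
    have hembinf : (M.emb '' E).Infinite := hEinf.image M.inj.injOn
    obtain ⟨z, hzc, hzr⟩ := M.exists_closure_not_range
      (by rintro _ ⟨g, _, rfl⟩; exact ⟨g, rfl⟩) hembinf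
    have hzS : z ∈ closure (M.emb '' S) :=
      closure_mono (Set.image_mono fun g hg => hg.1) hzc
    have hzp : z = p := by
      have : z ∈ closure (M.emb '' S) ∩ (Set.range M.emb)ᶜ := ⟨hzS, hzr⟩
      rw [hbd] at this
      exact this
    have hzK : z ∈ K := by
      have : closure (M.emb '' E) ⊆ K :=
        closure_minimal (fun x ⟨g, hg, hx⟩ => hx ▸ hg.2) hKc.isClosed
      exact this hzc
    exact hpK (hzp ▸ hzK)
  · -- no bad set ⟹ cocompact
    rintro hno
    obtain ⟨K₀, hK₀c, hK₀sub, hK₀cov⟩ := hcoY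
    have hpK₀ : p ∉ K₀ := fun h => (hK₀sub h).2 rfl
    -- a closed neighborhood V of p disjoint from K₀
    obtain ⟨V, hVnhds, hVclosed, hVsub⟩ :=
      exists_mem_nhds_isClosed_subset (hK₀c.isClosed.isOpen_compl.mem_nhds hpK₀)
    have hpV : p ∈ interior V := mem_interior_iff_mem_nhds.mpr hVnhds
    set S : Set G := {g | ∀ h ∈ H, M.emb (h * g) ∈ V} with hSdef
    have hHS : (↑H : Set G) * S = S := by
      apply Set.Subset.antisymm
      · rintro _ ⟨h, hh, g, hg, rfl⟩
        intro h' hh'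
        have : h' * (h * g) = (h' * h) * g := by group
        rw [this]
        exact hg _ (mul_mem hh' hh)
      · intro g hg
        exact ⟨1, one_mem _, g, hg, one_mul g⟩
    have hSV : M.emb '' S ⊆ V := by
      rintro _ ⟨g, hg, rfl⟩
      simpa using hg 1 (one_mem _)
    -- boundary of S is contained in {p}
    have hsub : closure (M.emb '' S) ∩ (Set.range M.emb)ᶜ ⊆ {p} := by
      rintro z ⟨hzc, hzr⟩
      by_contra hzp
      have hz' : z ∈ (⋃ g ∈ H, g • K₀) := by
        rw [hK₀cov]; exact ⟨hzr, hzp⟩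
      simp only [Set.mem_iUnion] at hz'
      obtain ⟨h, hh, x, hxK, hx⟩ := hz'
      have hxz : x = h⁻¹ • z := by rw [← hx, smul_smul, inv_mul_cancel, one_smul]
      have hxcl : x ∈ closure (M.emb '' S) := by
        rw [hxz, ← himg S hHS h⁻¹ (inv_mem hh), closure_smul]
        exact Set.smul_mem_smul_set hzc
      have hxV : x ∈ V := closure_minimal hSV hVclosed hxcl
      exact hVsub hxV hxK
    by_cases hfin : (q '' S).Finite
    · -- construct the compact fundamental set
      have hrepex : ∀ c ∈ q '' S, ∃ g, g ∈ S ∧ q g = c := by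
        rintro c ⟨g, hg, rfl⟩; exact ⟨g, hg, rfl⟩
      set rep : Quotient (QuotientGroup.rightRel H) → G := fun c =>
        if hc : c ∈ q '' S then (hrepex c hc).choose else 1 with hrepdef
      set F : Set G := rep '' (q '' S) with hF
      have hFfin : F.Finite := hfin.image rep
      set C : Set X := closure (Set.range M.emb ∩ (interior V)ᶜ) with hC
      set K : Set X := K₀ ∪ C ∪ M.emb '' F with hKdef
      have hKc : IsCompact K :=
        ((hK₀c.union isClosed_closure.isCompact).union
          ((hFfin.image M.emb).isCompact))
      have hpC : p ∉ C := by
        intro hpc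
        have : C ⊆ (interior V)ᶜ :=
          closure_minimal (fun x hx => hx.2) isOpen_interior.isClosed_compl
        exact this hpc hpV
      have hpK : p ∉ K := by
        rintro ((h | h) | h)
        · exact hpK₀ h
        · exact hpC h
        · obtain ⟨g, _, hg⟩ := h; exact hp ⟨g, hg⟩
      refine ⟨K, hKc, hpK, ?_⟩
      apply Set.Subset.antisymm
      · rintro _ hx
        simp only [Set.mem_iUnion] at hx
        obtain ⟨h, hh, x, hxK, rfl⟩ := hx
        intro hcon
        have : x = h⁻¹ • p := by
          rw [← Set.mem_singleton_iff.mp hcon, smul_smul, inv_mul_cancel, one_smul]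
        rw [this, (MulAction.mem_stabilizer_iff).mp (inv_mem hh)] at hxK
        exact hpK hxK
      · intro x hx
        simp only [Set.mem_iUnion]
        by_cases hxr : x ∈ Set.range M.emb
        · obtain ⟨g, rfl⟩ := hxr
          by_cases hgS : g ∈ S
          · -- use the representative of its coset
            have hcq : q g ∈ q '' S := ⟨g, hgS, rfl⟩
            have hrs := (hrepex (q g) hcq).choose_spec
            set g₀ : G := rep (q g) with hg₀
            have hg₀S : g₀ ∈ S ∧ q g₀ = q g := by
              rw [hg₀, hrepdef]; simp only [hcq, dif_pos]; exact hrs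
            have hrel : g * g₀⁻¹ ∈ H := by
              have := Quotient.eq'.mp hg₀S.2
              rwa [QuotientGroup.rightRel_apply] at this
            refine ⟨g * g₀⁻¹, hrel, ?_⟩
            have : M.emb g₀ ∈ K := Or.inr ⟨g₀, ⟨q g, hcq, rfl⟩, rfl⟩
            refine ⟨M.emb g₀, this, ?_⟩
            show (g * g₀⁻¹) • M.emb g₀ = M.emb g
            rw [M.smul_emb]
            congr 1
            group
          · -- some translate leaves V
            simp only [hSdef, Set.mem_setOf_eq, not_forall] at hgS
            obtain ⟨h, hh, hout⟩ := hgS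
            refine ⟨h⁻¹, inv_mem hh, M.emb (h * g), ?_, ?_⟩
            · refine Or.inl (Or.inr (subset_closure ⟨⟨h * g, rfl⟩, ?_⟩))
              intro hmem
              exact hout (interior_subset hmem)
            · show h⁻¹ • M.emb (h * g) = M.emb g
              rw [M.smul_emb]
              congr 1
              group
        · have : x ∈ (⋃ g ∈ H, g • K₀) := by
            rw [hK₀cov]; exact ⟨hxr, hx⟩
          simp only [Set.mem_iUnion] at this
          obtain ⟨h, hh, y, hy, hyx⟩ := this
          exact ⟨h, hh, y, Or.inl (Or.inl hy), hyx⟩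
    · -- infinitely many cosets: S is a forbidden set, contradiction
      exfalso
      apply hno
      refine ⟨S, hHS, hfin, ?_⟩
      apply Set.Subset.antisymm hsub
      -- show p is in the boundary
      have hSinf : S.Infinite := by
        intro hSfin
        exact hfin (hSfin.image q)
      obtain ⟨z, hzc, hzr⟩ := M.exists_closure_not_range
        (by rintro _ ⟨g, _, rfl⟩; exact ⟨g, rfl⟩) (hSinf.image M.inj.injOn)
      have : z = p := hsub ⟨hzc, hzr⟩
      rintro y rfl
      exact this ▸ ⟨hzc, hzr⟩
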